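/- arXiv:quant-ph/0212096 — 3 statements merged into one kernel-verified Lean document; each statement's English description precedes it below -/
import Mathlib

section
/- For all positive integers ℓ, m, n and any commutative semiring K, the stride permutation matrices of order ℓmn satisfy the factorization P_{mn}^{ℓmn} = P_m^{ℓmn} · P_n^{ℓmn}. -/
open Matrix

/-- The `mn`-point stride-`n` permutation, as a permutation of `Fin N` (where `N = m * n`):
it sends the index of `e_i^m ⊗ e_j^n` (i.e. `n*i + j`, zero-based) to the index of
`e_j^n ⊗ e_i^m` (i.e. `m*j + i`). -/
def strideEquiv (N m n : ℕ) (h : N = m * n) : Fin N ≃ Fin N :=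
  (finCongr h).trans <|
    finProdFinEquiv.symm.trans <|
      (Equiv.prodComm (Fin m) (Fin n)).trans <|
        finProdFinEquiv.trans (finCongr (by rw [h]; exact Nat.mul_comm n m))

/-- The `mn`-point stride-`n` permutation matrix `P_n^{mn}`: the `N × N` permutation matrix
(`N = m * n`) determined by `P_n^{mn} · (e_i^m ⊗ e_j^n) = e_j^n ⊗ e_i^m`. -/
def strideMat (K : Type*) [Semiring K] (N m n : ℕ) (h : N = m * n) :
    Matrix (Fin N) (Fin N) K :=
  Matrix.of fun a b => if a = strideEquiv N m n h b then 1 else 0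

lemma strideEquiv_val (N m n : ℕ) (h : N = m * n) (b : Fin N) :
    ((strideEquiv N m n h b : Fin N) : ℕ) = (b : ℕ) / n + m * ((b : ℕ) % n) := by
  simp [strideEquiv, finProdFinEquiv, Fin.divNat, Fin.modNat]

lemma mod_mul_decomp (b m n : ℕ) (hn : 0 < n) :
    b % (m * n) = n * ((b / n) % m) + b % n := by
  rcases Nat.eq_zero_or_pos m with hm | hm
  · subst hm
    rw [Nat.zero_mul, Nat.mod_zero, Nat.mod_zero, Nat.div_add_mod]
  conv_lhs => rw [← Nat.div_add_mod b n]
  conv_lhs => rw [← Nat.div_add_mod (b / n) m]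
  have h1 : n * (m * (b / n / m) + b / n % m) + b % n
      = (n * (b / n % m) + b % n) + (m * n) * (b / n / m) := by ring
  rw [h1, Nat.add_mul_mod_self_left, Nat.mod_eq_of_lt]
  have h2 : b / n % m < m := Nat.mod_lt _ hm
  have h3 : b % n < n := Nat.mod_lt _ hn
  calc n * (b / n % m) + b % n < n * (b / n % m) + n := by omega
    _ = n * (b / n % m + 1) := by ring
    _ ≤ n * m := Nat.mul_le_mul_left _ h2
    _ = m * n := Nat.mul_comm n m

/-- For all positive integers `ℓ, m, n` and any commutative semiring `K`,
the stride permutation matrices of order `ℓmn` satisfy `P_{mn}^{ℓmn} = P_m^{ℓmn} · P_n^{ℓmn}`. -/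
theorem stride_factorization (K : Type*) [CommSemiring K] (ℓ m n : ℕ)
    (hℓ : 0 < ℓ) (hm : 0 < m) (hn : 0 < n) :
    strideMat K (ℓ * m * n) ℓ (m * n) (mul_assoc ℓ m n) =
      strideMat K (ℓ * m * n) (ℓ * n) m (by ring) *
        strideMat K (ℓ * m * n) (ℓ * m) n (by ring) := by
  ext a b
  rw [Matrix.mul_apply]
  simp only [strideMat, Matrix.of_apply]
  rw [Finset.sum_eq_single (strideEquiv (ℓ*m*n) (ℓ*m) n (by ring) b)]
  · rw [if_pos rfl, mul_one]
    have key : strideEquiv (ℓ*m*n) ℓ (m*n) (mul_assoc ℓ m n) b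
        = strideEquiv (ℓ*m*n) (ℓ*n) m (by ring)
            (strideEquiv (ℓ*m*n) (ℓ*m) n (by ring) b) := by
      apply Fin.ext
      rw [strideEquiv_val, strideEquiv_val, strideEquiv_val]
      set v := (b : ℕ)
      set x := v / n + ℓ * m * (v % n) with hx
      have hxm : x % m = (v / n) % m := by
        rw [hx]
        have h : v / n + ℓ * m * (v % n) = v / n + m * (ℓ * (v % n)) := by ring
        rw [h, Nat.add_mul_mod_self_left]
      have hxd : x / m = v / n / m + ℓ * (v % n) := by
        rw [hx]
        have h : v / n + ℓ * m * (v % n) = v / n + m * (ℓ * (v % n)) := by ring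
        rw [h, Nat.add_mul_div_left _ _ hm]
      rw [hxm, hxd, mod_mul_decomp v m n hn, Nat.div_div_eq_div_mul, Nat.mul_comm n m]
      ring
    rw [key]
  · intro c _ hc
    simp [hc]
  · intro h
    exact absurd (Finset.mem_univ _) h
end

section
/- Let M be an n×n matrix over the real numbers that is orthogonal, i.e., Mᵀ·M = I_n. Then all entries of M are nonnegative if, and only if, M is a permutation matrix (exactly one entry in each row and each column equals 1 and all other entries equal 0). -/
open Matrix

/-- Let `M` be an `n × n` real matrix that is orthogonal, i.e.
`Mᵀ · M = Iₙ`. Then all entries of `M` are nonnegative if, and only if, `M` is a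
permutation matrix (exactly one entry in each row and column equals `1`, all others `0`). -/
theorem orthogonal_entries_nonneg_iff_permutation (n : ℕ) (M : Matrix (Fin n) (Fin n) ℝ)
    (hM : Mᵀ * M = 1) :
    (∀ i j, 0 ≤ M i j) ↔
      ∃ σ : Equiv.Perm (Fin n), ∀ i j, M i j = if σ j = i then 1 else 0 := by
  constructor
  · intro hpos
    have hcol : ∀ j k, ∑ i, M i j * M i k = if j = k then 1 else 0 := by
      intro j k
      have := congrFun (congrFun hM j) k
      simpa [Matrix.mul_apply, Matrix.transpose_apply, Matrix.one_apply] using this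
    set S : Fin n → Finset (Fin n) := fun j => Finset.univ.filter (fun i => M i j ≠ 0) with hS
    have hdisj : ∀ j k, j ≠ k → Disjoint (S j) (S k) := by
      intro j k hjk
      rw [Finset.disjoint_left]
      intro i hij hik
      simp only [hS, Finset.mem_filter] at hij hik
      have hsum := hcol j k
      rw [if_neg hjk] at hsum
      have hzero : ∀ i' ∈ Finset.univ, M i' j * M i' k = 0 := by
        intro i' _
        have := (Finset.sum_eq_zero_iff_of_nonneg (fun i' _ =>
          mul_nonneg (hpos i' j) (hpos i' k))).mp hsum
        exact this i' (Finset.mem_univ i')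
      have := hzero i (Finset.mem_univ i)
      rcases mul_eq_zero.mp this with h | h
      · exact hij.2 h
      · exact hik.2 h
    have hnonempty : ∀ j, (S j).Nonempty := by
      intro j
      by_contra h
      rw [Finset.not_nonempty_iff_eq_empty] at h
      have hzero : ∀ i, M i j = 0 := by
        intro i
        by_contra hi
        have : i ∈ S j := by simp [hS, hi]
        simp [h] at this
      have hsum := hcol j j
      simp [hzero] at hsum
    have hsum_le : ∑ j, (S j).card ≤ n := by
      have hb : (Finset.univ.biUnion S).card = ∑ j, (S j).card :=
        Finset.card_biUnion (fun j _ k _ h => hdisj j k h)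
      rw [← hb]
      calc (Finset.univ.biUnion S).card ≤ (Finset.univ : Finset (Fin n)).card :=
            Finset.card_le_card (Finset.subset_univ _)
        _ = n := by simp
    have hcard : ∀ j, (S j).card = 1 := by
      intro j
      by_contra h
      have h1 : 1 ≤ (S j).card := Finset.card_pos.mpr (hnonempty j)
      have h2 : 2 ≤ (S j).card := by omega
      have : n + 1 ≤ ∑ k, (S k).card := by
        have : ∑ k, (if k = j then 2 else 1) ≤ ∑ k, (S k).card := by
          apply Finset.sum_le_sum
          intro k _
          by_cases hk : k = j
          · simpa [hk] using h2
          · simpa [hk] using Finset.card_pos.mpr (hnonempty k)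
        calc n + 1 = ∑ k : Fin n, (if k = j then 2 else 1) := by
              have he : ∑ k : Fin n, (if k = j then 2 else 1)
                  = ∑ k : Fin n, ((if k = j then 1 else 0) + 1) := by
                apply Finset.sum_congr rfl
                intro k _
                split_ifs <;> ring
              rw [he, Finset.sum_add_distrib]
              simp [Finset.sum_ite_eq', Finset.card_univ]
              omega
          _ ≤ _ := this
      omega
    have hsingle : ∀ j, ∃ a, S j = {a} := fun j => Finset.card_eq_one.mp (hcard j)
    choose f hf using hsingle
    have hmem : ∀ j, f j ∈ S j := fun j => by rw [hf j]; exact Finset.mem_singleton_self _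
    have hinj : Function.Injective f := by
      intro j k hjk
      by_contra h
      have := hdisj j k h
      rw [Finset.disjoint_left] at this
      exact this (hmem j) (hjk ▸ hmem k)
    refine ⟨Equiv.ofBijective f (Finite.injective_iff_bijective.mp hinj), ?_⟩
    intro i j
    simp only [Equiv.ofBijective_apply]
    have hnot : ∀ i', i' ≠ f j → M i' j = 0 := by
      intro i' hi'
      by_contra hne
      have : i' ∈ S j := by simp [hS, hne]
      rw [hf j, Finset.mem_singleton] at this
      exact hi' this
    by_cases hij : f j = i
    · rw [if_pos hij]
      subst hij
      have hsum := hcol j j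
      rw [if_pos rfl] at hsum
      rw [Finset.sum_eq_single (f j)] at hsum
      · have hsq : M (f j) j * M (f j) j = 1 := hsum
        have hge : 0 ≤ M (f j) j := hpos _ _
        nlinarith
      · intro b _ hb
        rw [hnot b hb]
        ring
      · intro hb
        exact absurd (Finset.mem_univ (f j)) hb
    · rw [if_neg hij]
      exact hnot i (fun h => hij h.symm)
  · rintro ⟨σ, h⟩ i j
    rw [h]
    split_ifs <;> norm_num
end

section
/- Let K be a commutative semiring, let A be an m×m matrix and B an n×n matrix over K, and let μ ≥ m and ν ≥ n. Let Ā = π_μ(A) and B̄ = π_ν(B) be the padded matrices (block-diagonal with identity padding). Then there exist permutation matrices Q and Q' of order μν and a square matrix H of order μν − mn such that Q · (Ā ⊗ B̄) · Q' equals the block-diagonal matrix [[A⊗B, 0], [0, H]]; moreover, over a commutative ring, if A and B are orthogonal then H is orthogonal. -/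
open Matrix

/-- Padding of an `n × n` matrix to an `N × N` matrix: block-diagonal form
`[[A, 0], [0, I_{N-n}]]`, with `A` in the top-left `n × n` block, the identity in the
bottom-right block, and zeros elsewhere. -/
def padM (K : Type*) [Semiring K] (N : ℕ) {n : ℕ} (A : Matrix (Fin n) (Fin n) K) :
    Matrix (Fin N) (Fin N) K :=
  Matrix.of fun i j =>
    if hi : (i : ℕ) < n then
      if hj : (j : ℕ) < n then A ⟨i, hi⟩ ⟨j, hj⟩ else 0
    else
      if (i : ℕ) = (j : ℕ) then 1 else 0

/-- Kronecker (tensor) product of matrices, with row-major indexing by `Fin`: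
the `(n*i + s, q*j + t)` entry of `kron A B` is `A i j * B s t`. -/
def kron {K : Type*} [Mul K] {m n p q : ℕ}
    (A : Matrix (Fin m) (Fin n) K) (B : Matrix (Fin p) (Fin q) K) :
    Matrix (Fin (m * p)) (Fin (n * q)) K :=
  Matrix.reindex finProdFinEquiv finProdFinEquiv (Matrix.kroneckerMap (· * ·) A B)

/-- The `N × N` block-diagonal matrix `[[X, 0], [0, H]]` with top-left block `X` of
order `a` and bottom-right block `H` of order `N - a`. -/
def blockDiag2 (K : Type*) [Semiring K] (N : ℕ) {a : ℕ} (X : Matrix (Fin a) (Fin a) K)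
    (H : Matrix (Fin (N - a)) (Fin (N - a)) K) : Matrix (Fin N) (Fin N) K :=
  Matrix.of fun i j =>
    if hi : (i : ℕ) < a then
      (if hj : (j : ℕ) < a then X ⟨i, hi⟩ ⟨j, hj⟩ else 0)
    else if (j : ℕ) < a then 0
    else H ⟨(i : ℕ) - a, by have := i.isLt; omega⟩ ⟨(j : ℕ) - a, by have := j.isLt; omega⟩

/-- The permutation matrix of a permutation `σ`: its column `j` is the standard basis
vector `e_{σ j}` (exactly one `1` in each row and in each column, zeros elsewhere). -/
def permMat (K : Type*) [Semiring K] {N : ℕ} (σ : Equiv.Perm (Fin N)) :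
    Matrix (Fin N) (Fin N) K :=
  Matrix.of fun i j => if σ j = i then 1 else 0


def finSplit {n N : ℕ} (h : n ≤ N) : Fin N ≃ Fin n ⊕ Fin (N - n) :=
  (finCongr (by omega : N = n + (N - n))).trans finSumFinEquiv.symm

lemma finSplit_apply_lt {n N : ℕ} (h : n ≤ N) (i : Fin N) (hi : (i : ℕ) < n) :
    finSplit h i = Sum.inl ⟨i, hi⟩ := by
  have h1 : finCongr (by omega : N = n + (N - n)) i = Fin.castAdd (N - n) ⟨i, hi⟩ := by
    ext; simp
  show finSumFinEquiv.symm ((finCongr _) i) = _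
  rw [h1, finSumFinEquiv_symm_apply_castAdd]

lemma finSplit_apply_ge {n N : ℕ} (h : n ≤ N) (i : Fin N) (hi : ¬ (i : ℕ) < n) :
    finSplit h i = Sum.inr ⟨(i : ℕ) - n, by have := i.isLt; omega⟩ := by
  have h1 : finCongr (by omega : N = n + (N - n)) i
      = Fin.natAdd n ⟨(i : ℕ) - n, by have := i.isLt; omega⟩ := by
    ext; simp; omega
  show finSumFinEquiv.symm ((finCongr _) i) = _
  rw [h1, finSumFinEquiv_symm_apply_natAdd]

lemma padM_eq_submatrix {K : Type*} [Semiring K] {n N : ℕ} (h : n ≤ N)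
    (A : Matrix (Fin n) (Fin n) K) :
    padM K N A = Matrix.submatrix
      (Matrix.fromBlocks A 0 0 (1 : Matrix (Fin (N - n)) (Fin (N - n)) K))
      (finSplit h) (finSplit h) := by
  ext i j
  rcases Nat.lt_or_ge (i:ℕ) n with hi | hi <;> rcases Nat.lt_or_ge (j:ℕ) n with hj | hj
  · simp [padM, finSplit_apply_lt h i hi, finSplit_apply_lt h j hj, hi, hj]
  · simp [padM, finSplit_apply_lt h i hi, finSplit_apply_ge h j (by omega), hi, hj]
  · simp only [padM, Matrix.of_apply, Matrix.submatrix_apply,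
      finSplit_apply_ge h i (by omega), finSplit_apply_lt h j hj,
      dif_neg (by omega : ¬ (i:ℕ) < n), Matrix.fromBlocks_apply₂₁, Matrix.zero_apply]
    rw [if_neg (by omega)]
  · simp only [padM, Matrix.of_apply, Matrix.submatrix_apply,
      finSplit_apply_ge h i (by omega), finSplit_apply_ge h j (by omega),
      dif_neg (by omega : ¬ (i:ℕ) < n), Matrix.fromBlocks_apply₂₂, Matrix.one_apply,
      Fin.mk.injEq]
    by_cases hij : (i:ℕ) = (j:ℕ)
    · rw [if_pos hij, if_pos (by omega)]
    · rw [if_neg hij, if_neg (by omega)]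

lemma padM_orth {K : Type*} [CommSemiring K] {n N : ℕ} (h : n ≤ N)
    (A : Matrix (Fin n) (Fin n) K) (hA : Aᵀ * A = 1) :
    (padM K N A)ᵀ * padM K N A = 1 := by
  rw [padM_eq_submatrix h, Matrix.transpose_submatrix,
    Matrix.fromBlocks_transpose, Matrix.submatrix_mul_equiv]
  simp [Matrix.fromBlocks_multiply, hA, Matrix.fromBlocks_one]

lemma kron_apply {K : Type*} [Mul K] {m n p q : ℕ}
    (A : Matrix (Fin m) (Fin n) K) (B : Matrix (Fin p) (Fin q) K) (x : Fin (m*p)) (y : Fin (n*q)) :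
    kron A B x y = A (finProdFinEquiv.symm x).1 (finProdFinEquiv.symm y).1 *
      B (finProdFinEquiv.symm x).2 (finProdFinEquiv.symm y).2 := rfl


lemma kron_orth {K : Type*} [CommSemiring K] {p q : ℕ}
    (X : Matrix (Fin p) (Fin p) K) (Y : Matrix (Fin q) (Fin q) K)
    (hX : Xᵀ * X = 1) (hY : Yᵀ * Y = 1) : (kron X Y)ᵀ * kron X Y = 1 := by
  unfold kron
  rw [Matrix.reindex_apply, Matrix.transpose_submatrix,
    Matrix.submatrix_mul_equiv, ← Matrix.kroneckerMap_transpose,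
    ← Matrix.mul_kronecker_mul, hX, hY, Matrix.one_kronecker_one, Matrix.submatrix_one_equiv]

section E
variable {m n μ ν : ℕ}

def Pset (m n : ℕ) {μ ν : ℕ} (x : Fin (μ * ν)) : Prop :=
  ((finProdFinEquiv.symm x).1 : ℕ) < m ∧ ((finProdFinEquiv.symm x).2 : ℕ) < n

instance PsetDec (m n : ℕ) {μ ν : ℕ} : DecidablePred (fun x : Fin (μ * ν) => Pset m n x) :=
  fun _ => instDecidableAnd

def fEmb (hm : m ≤ μ) (hn : n ≤ ν) (k : Fin (m * n)) : Fin (μ * ν) :=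
  finProdFinEquiv (Fin.castLE hm (finProdFinEquiv.symm k).1,
    Fin.castLE hn (finProdFinEquiv.symm k).2)

lemma fEmb_symm (hm : m ≤ μ) (hn : n ≤ ν) (k : Fin (m * n)) :
    finProdFinEquiv.symm (fEmb hm hn k) =
      (Fin.castLE hm (finProdFinEquiv.symm k).1, Fin.castLE hn (finProdFinEquiv.symm k).2) :=
  Equiv.symm_apply_apply _ _

lemma Pset_fEmb (hm : m ≤ μ) (hn : n ≤ ν) (k : Fin (m * n)) : Pset m n (fEmb hm hn k) := by
  unfold Pset
  rw [fEmb_symm]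
  exact ⟨(finProdFinEquiv.symm k).1.isLt, (finProdFinEquiv.symm k).2.isLt⟩

lemma fEmb_injective (hm : m ≤ μ) (hn : n ≤ ν) : Function.Injective (fEmb hm hn) := by
  intro a b hab
  unfold fEmb at hab
  have h := finProdFinEquiv.injective hab
  have h1 : (finProdFinEquiv.symm a).1 = (finProdFinEquiv.symm b).1 :=
    Fin.castLE_injective hm (congrArg Prod.fst h)
  have h2 : (finProdFinEquiv.symm a).2 = (finProdFinEquiv.symm b).2 :=
    Fin.castLE_injective hn (congrArg Prod.snd h)
  have : (finProdFinEquiv.symm a) = (finProdFinEquiv.symm b) := Prod.ext h1 h2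
  exact finProdFinEquiv.symm.injective this

noncomputable def eP (hm : m ≤ μ) (hn : n ≤ ν) :
    Fin (m * n) ≃ {x : Fin (μ * ν) // Pset m n x} :=
  Equiv.ofBijective (fun k => ⟨fEmb hm hn k, Pset_fEmb hm hn k⟩) (by
    constructor
    · intro a b hab
      exact fEmb_injective hm hn (congrArg Subtype.val hab)
    · rintro ⟨x, hx⟩
      refine ⟨finProdFinEquiv (⟨(finProdFinEquiv.symm x).1, hx.1⟩,
        ⟨((finProdFinEquiv.symm x).2 : ℕ), hx.2⟩), ?_⟩
      apply Subtype.ext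
      show fEmb hm hn _ = x
      unfold fEmb
      rw [Equiv.symm_apply_apply]
      have e1 : Fin.castLE hm (⟨((finProdFinEquiv.symm x).1 : ℕ), hx.1⟩ : Fin m)
          = (finProdFinEquiv.symm x).1 := by ext; rfl
      have e2 : Fin.castLE hn (⟨((finProdFinEquiv.symm x).2 : ℕ), hx.2⟩ : Fin n)
          = (finProdFinEquiv.symm x).2 := by ext; rfl
      rw [e1, e2, Prod.mk.eta, Equiv.apply_symm_apply])

lemma card_Pset (hm : m ≤ μ) (hn : n ≤ ν) :
    Fintype.card {x : Fin (μ * ν) // Pset m n x} = m * n := by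
  rw [← Fintype.card_fin (m * n)]
  exact (Fintype.card_congr (eP hm hn)).symm

noncomputable def eQ (hm : m ≤ μ) (hn : n ≤ ν) :
    Fin (μ * ν - m * n) ≃ {x : Fin (μ * ν) // ¬ Pset m n x} :=
  Fintype.equivOfCardEq (by
    rw [Fintype.card_subtype_compl, card_Pset hm hn, Fintype.card_fin, Fintype.card_fin])

noncomputable def eFull (hm : m ≤ μ) (hn : n ≤ ν) : Fin (μ * ν) ≃ Fin (μ * ν) :=
  (finSplit (Nat.mul_le_mul hm hn)).trans
    ((Equiv.sumCongr (eP hm hn) (eQ hm hn)).trans (Equiv.sumCompl (Pset m n)))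

lemma eFull_lt (hm : m ≤ μ) (hn : n ≤ ν) (i : Fin (μ * ν)) (hi : (i : ℕ) < m * n) :
    eFull hm hn i = fEmb hm hn ⟨i, hi⟩ := by
  unfold eFull
  simp only [Equiv.trans_apply, finSplit_apply_lt _ i hi, Equiv.sumCongr_apply,
    Sum.map_inl, Equiv.sumCompl_apply_inl]
  rfl

lemma eFull_ge (hm : m ≤ μ) (hn : n ≤ ν) (i : Fin (μ * ν)) (hi : ¬ (i : ℕ) < m * n) :
    eFull hm hn i = (eQ hm hn ⟨(i : ℕ) - m * n, by have := i.isLt; omega⟩ : _).val := by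
  unfold eFull
  simp only [Equiv.trans_apply, finSplit_apply_ge _ i hi, Equiv.sumCongr_apply,
    Sum.map_inr, Equiv.sumCompl_apply_inr]

lemma not_Pset_eFull_ge (hm : m ≤ μ) (hn : n ≤ ν) (i : Fin (μ * ν)) (hi : ¬ (i : ℕ) < m * n) :
    ¬ Pset m n (eFull hm hn i) := by
  rw [eFull_ge hm hn i hi]
  exact (eQ hm hn _).2

lemma Pset_eFull_lt (hm : m ≤ μ) (hn : n ≤ ν) (i : Fin (μ * ν)) (hi : (i : ℕ) < m * n) :
    Pset m n (eFull hm hn i) := by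
  rw [eFull_lt hm hn i hi]; exact Pset_fEmb hm hn _

def shiftIdx (hm : m ≤ μ) (hn : n ≤ ν) (a : Fin (μ * ν - m * n)) : Fin (μ * ν) :=
  ⟨m * n + a, by have := a.isLt; have := Nat.mul_le_mul hm hn; omega⟩

lemma finSplit_symm_inl_val {n N : ℕ} (h : n ≤ N) (a : Fin n) :
    (((finSplit h).symm (Sum.inl a) : Fin N) : ℕ) = a := by
  simp [finSplit]

lemma finSplit_symm_inr_val {n N : ℕ} (h : n ≤ N) (b : Fin (N - n)) :
    (((finSplit h).symm (Sum.inr b) : Fin N) : ℕ) = n + b := by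
  simp [finSplit]

end E

lemma permMat_mul_apply {K : Type*} [Semiring K] {N : ℕ} (σ : Equiv.Perm (Fin N))
    (M : Matrix (Fin N) (Fin N) K) (i k : Fin N) :
    (permMat K σ * M) i k = M (σ.symm i) k := by
  rw [Matrix.mul_apply]
  rw [Finset.sum_eq_single (σ.symm i)]
  · simp [permMat]
  · intro b _ hb
    have : σ b ≠ i := fun hc => hb (by rw [← hc, Equiv.symm_apply_apply])
    simp [permMat, this]
  · intro h; exact absurd (Finset.mem_univ _) h

lemma mul_permMat_apply {K : Type*} [Semiring K] {N : ℕ} (σ : Equiv.Perm (Fin N))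
    (M : Matrix (Fin N) (Fin N) K) (i j : Fin N) :
    (M * permMat K σ) i j = M i (σ j) := by
  rw [Matrix.mul_apply]
  rw [Finset.sum_eq_single (σ j)]
  · simp [permMat]
  · intro b _ hb
    simp [permMat, (Ne.symm hb)]
  · intro h; exact absurd (Finset.mem_univ _) h

lemma padM_apply_lt {K : Type*} [Semiring K] {n N : ℕ} (A : Matrix (Fin n) (Fin n) K)
    (i j : Fin N) (hi : (i : ℕ) < n) (hj : (j : ℕ) < n) :
    padM K N A i j = A ⟨i, hi⟩ ⟨j, hj⟩ := by
  simp only [padM, Matrix.of_apply, dif_pos hi, dif_pos hj]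

lemma padM_zero_right {K : Type*} [Semiring K] {n N : ℕ} (A : Matrix (Fin n) (Fin n) K)
    (i j : Fin N) (hi : (i : ℕ) < n) (hj : ¬ (j : ℕ) < n) :
    padM K N A i j = 0 := by
  simp only [padM, Matrix.of_apply, dif_pos hi, dif_neg hj]

lemma padM_zero_left {K : Type*} [Semiring K] {n N : ℕ} (A : Matrix (Fin n) (Fin n) K)
    (i j : Fin N) (hi : ¬ (i : ℕ) < n) (hj : (j : ℕ) < n) :
    padM K N A i j = 0 := by
  simp only [padM, Matrix.of_apply, dif_neg hi]
  rw [if_neg (by omega)]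

section Main
variable {K : Type*} [CommSemiring K] {m n μ ν : ℕ}

lemma M_zero_right (hm : m ≤ μ) (hn : n ≤ ν)
    (A : Matrix (Fin m) (Fin m) K) (B : Matrix (Fin n) (Fin n) K)
    (x y : Fin (μ * ν)) (hx : Pset m n x) (hy : ¬ Pset m n y) :
    kron (padM K μ A) (padM K ν B) x y = 0 := by
  rw [kron_apply]
  rcases not_and_or.mp hy with h | h
  · rw [padM_zero_right A _ _ hx.1 h, zero_mul]
  · rw [padM_zero_right B _ _ hx.2 h, mul_zero]

lemma M_zero_left (hm : m ≤ μ) (hn : n ≤ ν)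
    (A : Matrix (Fin m) (Fin m) K) (B : Matrix (Fin n) (Fin n) K)
    (x y : Fin (μ * ν)) (hx : ¬ Pset m n x) (hy : Pset m n y) :
    kron (padM K μ A) (padM K ν B) x y = 0 := by
  rw [kron_apply]
  rcases not_and_or.mp hx with h | h
  · rw [padM_zero_left A _ _ h hy.1, zero_mul]
  · rw [padM_zero_left B _ _ h hy.2, mul_zero]

lemma M_top (hm : m ≤ μ) (hn : n ≤ ν)
    (A : Matrix (Fin m) (Fin m) K) (B : Matrix (Fin n) (Fin n) K) (i j : Fin (m * n)) :
    kron (padM K μ A) (padM K ν B) (fEmb hm hn i) (fEmb hm hn j) = kron A B i j := by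
  rw [kron_apply, kron_apply, fEmb_symm, fEmb_symm]
  dsimp only
  rw [padM_apply_lt A _ _ (by simpa using (finProdFinEquiv.symm i).1.isLt)
      (by simpa using (finProdFinEquiv.symm j).1.isLt),
    padM_apply_lt B _ _ (by simpa using (finProdFinEquiv.symm i).2.isLt)
      (by simpa using (finProdFinEquiv.symm j).2.isLt)]
  congr 1 <;> congr 1 <;> exact Fin.ext rfl

end Main

section Main2
variable {K : Type*} [CommSemiring K] {m n μ ν : ℕ}

noncomputable def Hmat (hm : m ≤ μ) (hn : n ≤ ν)
    (A : Matrix (Fin m) (Fin m) K) (B : Matrix (Fin n) (Fin n) K) :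
    Matrix (Fin (μ * ν - m * n)) (Fin (μ * ν - m * n)) K :=
  Matrix.of fun a b =>
    kron (padM K μ A) (padM K ν B) (eFull hm hn (shiftIdx hm hn a))
      (eFull hm hn (shiftIdx hm hn b))

lemma key_eq (hm : m ≤ μ) (hn : n ≤ ν)
    (A : Matrix (Fin m) (Fin m) K) (B : Matrix (Fin n) (Fin n) K) :
    permMat K (eFull hm hn).symm * kron (padM K μ A) (padM K ν B) *
      permMat K (eFull hm hn) =
    blockDiag2 K (μ * ν) (kron A B) (Hmat hm hn A B) := by
  ext i j
  rw [mul_permMat_apply, permMat_mul_apply, Equiv.symm_symm]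
  by_cases hi : (i : ℕ) < m * n <;> by_cases hj : (j : ℕ) < m * n
  · simp only [blockDiag2, Matrix.of_apply, dif_pos hi, dif_pos hj]
    rw [eFull_lt hm hn i hi, eFull_lt hm hn j hj]
    exact M_top hm hn A B _ _
  · simp only [blockDiag2, Matrix.of_apply, dif_pos hi, dif_neg hj]
    exact M_zero_right hm hn A B _ _ (Pset_eFull_lt hm hn i hi) (not_Pset_eFull_ge hm hn j hj)
  · simp only [blockDiag2, Matrix.of_apply, dif_neg hi, if_pos hj]
    exact M_zero_left hm hn A B _ _ (not_Pset_eFull_ge hm hn i hi) (Pset_eFull_lt hm hn j hj)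
  · simp only [blockDiag2, Matrix.of_apply, dif_neg hi, if_neg hj, Hmat]
    rw [show shiftIdx hm hn ⟨(i : ℕ) - m * n, by have := i.isLt; omega⟩ = i from
        Fin.ext (by simp [shiftIdx]; omega),
      show shiftIdx hm hn ⟨(j : ℕ) - m * n, by have := j.isLt; omega⟩ = j from
        Fin.ext (by simp [shiftIdx]; omega)]

lemma Hmat_orth (hm : m ≤ μ) (hn : n ≤ ν)
    (A : Matrix (Fin m) (Fin m) K) (B : Matrix (Fin n) (Fin n) K)
    (hA : Aᵀ * A = 1) (hB : Bᵀ * B = 1) :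
    (Hmat hm hn A B)ᵀ * Hmat hm hn A B = 1 := by
  set M := kron (padM K μ A) (padM K ν B) with hMdef
  have hM : Mᵀ * M = 1 := kron_orth _ _ (padM_orth hm A hA) (padM_orth hn B hB)
  have hmn : m * n ≤ μ * ν := Nat.mul_le_mul hm hn
  ext a b
  set x := eFull hm hn (shiftIdx hm hn a) with hx
  set y := eFull hm hn (shiftIdx hm hn b) with hy
  have hsum : ∑ k : Fin (μ * ν), M k x * M k y
      = ∑ c : Fin (μ * ν - m * n), M (eFull hm hn (shiftIdx hm hn c)) x
          * M (eFull hm hn (shiftIdx hm hn c)) y := by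
    rw [← Equiv.sum_comp (eFull hm hn) (fun k => M k x * M k y)]
    rw [← Equiv.sum_comp (finSplit hmn).symm
      (fun i => M (eFull hm hn i) x * M (eFull hm hn i) y)]
    rw [Fintype.sum_sum_type]
    have hzero : ∀ c : Fin (m * n),
        M (eFull hm hn ((finSplit hmn).symm (Sum.inl c))) x
          * M (eFull hm hn ((finSplit hmn).symm (Sum.inl c))) y = 0 := by
      intro c
      have hlt : (((finSplit hmn).symm (Sum.inl c) : Fin (μ * ν)) : ℕ) < m * n := by
        rw [finSplit_symm_inl_val]; exact c.isLt
      have h1 : Pset m n (eFull hm hn ((finSplit hmn).symm (Sum.inl c))) :=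
        Pset_eFull_lt hm hn _ hlt
      have h2 : ¬ Pset m n x := by
        rw [hx]
        exact not_Pset_eFull_ge hm hn _ (by simp [shiftIdx])
      rw [hMdef] at *
      rw [M_zero_right hm hn A B _ _ h1 h2, zero_mul]
    rw [Finset.sum_congr rfl (fun c _ => hzero c), Finset.sum_const, smul_zero, zero_add]
    apply Finset.sum_congr rfl
    intro c _
    have : (finSplit hmn).symm (Sum.inr c) = shiftIdx hm hn c := by
      apply Fin.ext
      rw [finSplit_symm_inr_val]
      rfl
    rw [this]
  have h1 := congrFun (congrFun hM x) y
  rw [Matrix.mul_apply] at h1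
  simp only [Matrix.transpose_apply] at h1
  rw [Matrix.mul_apply]
  simp only [Hmat, Matrix.transpose_apply, Matrix.of_apply]
  rw [← hx, ← hy, ← hsum, h1]
  have hinj : x = y ↔ a = b := by
    constructor
    · intro h
      have := (eFull hm hn).injective (hx ▸ hy ▸ h)
      have hv : m * n + (a : ℕ) = m * n + (b : ℕ) := congrArg Fin.val this
      exact Fin.ext (by omega)
    · intro h; rw [hx, hy, h]
  by_cases hab : a = b
  · rw [show x = y from hinj.mpr hab, hab, Matrix.one_apply_eq, Matrix.one_apply_eq]
  · rw [Matrix.one_apply_ne (fun h => hab (hinj.mp h)), Matrix.one_apply_ne hab]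

end Main2

/-- For matrices `A` (order `m`) and `B` (order `n`) over a commutative
semiring, and `μ ≥ m`, `ν ≥ n`, there are permutation matrices `Q, Q'` of order `μν` and a
square matrix `H` of order `μν - mn` with `Q · (π_μ(A) ⊗ π_ν(B)) · Q' = [[A ⊗ B, 0], [0, H]]`;
moreover, over a commutative ring, if `A` and `B` are orthogonal then `H` is orthogonal. -/
theorem kron_padded_perm_block (K : Type*) [CommSemiring K] (m n μ ν : ℕ)
    (hm : m ≤ μ) (hn : n ≤ ν) :
    (∀ (A : Matrix (Fin m) (Fin m) K) (B : Matrix (Fin n) (Fin n) K),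
      ∃ (σ σ' : Equiv.Perm (Fin (μ * ν)))
        (H : Matrix (Fin (μ * ν - m * n)) (Fin (μ * ν - m * n)) K),
        permMat K σ * kron (padM K μ A) (padM K ν B) * permMat K σ' =
          blockDiag2 K (μ * ν) (kron A B) H) ∧
    (∀ (R : Type) [CommRing R] (A : Matrix (Fin m) (Fin m) R) (B : Matrix (Fin n) (Fin n) R),
      Aᵀ * A = 1 → Bᵀ * B = 1 →
      ∃ (σ σ' : Equiv.Perm (Fin (μ * ν)))
        (H : Matrix (Fin (μ * ν - m * n)) (Fin (μ * ν - m * n)) R),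
        permMat R σ * kron (padM R μ A) (padM R ν B) * permMat R σ' =
          blockDiag2 R (μ * ν) (kron A B) H ∧
        Hᵀ * H = 1) := by
  constructor
  · intro A B
    exact ⟨(eFull hm hn).symm, eFull hm hn, Hmat hm hn A B, key_eq hm hn A B⟩
  · intro R _ A B hA hB
    exact ⟨(eFull hm hn).symm, eFull hm hn, Hmat hm hn A B, key_eq hm hn A B,
      Hmat_orth hm hn A B hA hB⟩
end
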